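/- The ₃F₂ transformation identity: for a nonnegative integer n, ₃F₂(−n, a, b; d, e; 1) = ((d−a)_n (e−a)_n / ((d)_n (e)_n)) · ₃F₂(−n, a, a+b−n−d−e+1; a−n−d+1, a−n−e+1; 1), whenever both sides are defined (no vanishing Pochhammer symbols in the denominators). -/

import Mathlib

open Finset

/-- The Pochhammer symbol `(a)_n = a(a+1)⋯(a+n-1)` for a real argument. -/
noncomputable def poch (a : ℝ) (n : ℕ) : ℝ := ∏ i ∈ Finset.range n, (a + i)

/-- The terminating hypergeometric sum `₃F₂(-n, a, b; d, e; 1)`. -/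
noncomputable def F32 (n : ℕ) (a b d e : ℝ) : ℝ :=
  ∑ j ∈ Finset.range (n + 1),
    poch (-(n : ℝ)) j * poch a j * poch b j /
      (poch d j * poch e j * (Nat.factorial j : ℝ))

open Nat

lemma poch_zero (a : ℝ) : poch a 0 = 1 := by simp [poch]

lemma poch_succ (a : ℝ) (n : ℕ) : poch a (n + 1) = poch a n * (a + n) := by
  simp [poch, Finset.prod_range_succ]

lemma poch_succ' (a : ℝ) (n : ℕ) : poch a (n + 1) = a * poch (a + 1) n := by
  rw [poch, Finset.prod_range_succ', mul_comm]
  congr 1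
  · simp
  · rw [poch]
    exact Finset.prod_congr rfl fun i _ => by push_cast; ring

lemma poch_add (a : ℝ) (m k : ℕ) :
    poch a (m + k) = poch a m * poch (a + m) k := by
  induction k with
  | zero => simp [poch_zero]
  | succ k ih =>
      rw [← Nat.add_assoc, poch_succ, ih, poch_succ]
      push_cast
      ring

lemma poch_rev (a : ℝ) (n : ℕ) :
    poch (-a - n + 1) n = (-1) ^ n * poch a n := by
  induction n with
  | zero => simp [poch_zero]
  | succ n ih =>
      have h1 : -a - ((n + 1 : ℕ) : ℝ) + 1 = -a - n := by push_cast; ring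
      rw [h1, poch_succ', ih, poch_succ]
      push_cast
      ring_nf

lemma poch_nat (m : ℕ) (j : ℕ) :
    poch ((m : ℝ) + 1) j * (m ! : ℝ) = ((m + j)! : ℝ) := by
  induction j with
  | zero => simp [poch_zero]
  | succ j ih =>
      have h2 : m + (j + 1) = (m + j) + 1 := by omega
      rw [poch_succ, h2, Nat.factorial_succ]
      push_cast
      linear_combination ((m : ℝ) + 1 + j) * ih

lemma poch_neg_nat {n j : ℕ} (h : j ≤ n) :
    poch (-(n : ℝ)) j = (-1) ^ j * (n.choose j : ℝ) * (j ! : ℝ) := by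
  have h1 : (-(n : ℝ)) = -(((n - j : ℕ) : ℝ) + 1) - (j : ℝ) + 1 := by
    push_cast [Nat.cast_sub h]; ring
  rw [h1, poch_rev]
  have h2 := poch_nat (n - j) j
  rw [Nat.sub_add_cancel h] at h2
  have h3 : (n.choose j : ℝ) * (j ! : ℝ) * ((n - j)! : ℝ) = (n ! : ℝ) := by
    exact_mod_cast Nat.choose_mul_factorial_mul_factorial h
  have hne : (((n - j)! : ℕ) : ℝ) ≠ 0 := Nat.cast_ne_zero.2 (Nat.factorial_ne_zero _)
  have h4 : poch (((n - j : ℕ) : ℝ) + 1) j = (n.choose j : ℝ) * (j ! : ℝ) :=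
    mul_right_cancel₀ hne (h2.trans h3.symm)
  rw [h4]; ring

lemma choose_trinomial {n j k : ℕ} (hk : k ≤ j) (hj : j ≤ n) :
    n.choose j * j.choose k = n.choose k * (n - k).choose (j - k) := by
  have hkn : k ≤ n := hk.trans hj
  have hjk : j - k ≤ n - k := by omega
  have c1 : (n - k).choose (j - k) * ((j - k)! * (n - j)!) = (n - k)! := by
    have := Nat.choose_mul_factorial_mul_factorial hjk
    rw [show (n - k) - (j - k) = n - j from by omega] at this
    rw [← this]; ring
  have c2 : n.choose k * k ! * (n - k)! = n ! := Nat.choose_mul_factorial_mul_factorial hkn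
  have c3 : j.choose k * k ! * (j - k)! = j ! := Nat.choose_mul_factorial_mul_factorial hk
  have c4 : n.choose j * j ! * (n - j)! = n ! := Nat.choose_mul_factorial_mul_factorial hj
  have hpos : 0 < k ! * ((j - k)! * (n - j)!) :=
    Nat.mul_pos (Nat.factorial_pos _) (Nat.mul_pos (Nat.factorial_pos _) (Nat.factorial_pos _))
  apply Nat.eq_of_mul_eq_mul_right hpos
  calc n.choose j * j.choose k * (k ! * ((j - k)! * (n - j)!))
      = n.choose j * (j.choose k * k ! * (j - k)!) * (n - j)! := by ring
    _ = n ! := by rw [c3, c4]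
    _ = n.choose k * k ! * (n - k)! := c2.symm
    _ = n.choose k * k ! * ((n - k).choose (j - k) * ((j - k)! * (n - j)!)) := by rw [c1]
    _ = n.choose k * (n - k).choose (j - k) * (k ! * ((j - k)! * (n - j)!)) := by ring

lemma V1 : ∀ (m : ℕ) (y z : ℝ),
    ∑ i ∈ range (m + 1),
      (-1 : ℝ) ^ i * (m.choose i : ℝ) * poch y i * poch (z + i) (m - i)
      = poch (z - y) m := by
  intro m
  induction m with
  | zero => intro y z; simp [poch_zero]
  | succ m ih =>
    intro y z
    have ih1 := ih (y + 1) (z + 1)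
    rw [show (z + 1) - (y + 1) = z - y from by ring] at ih1
    have ih2 := ih y z
    calc ∑ i ∈ range (m + 1 + 1),
        (-1 : ℝ) ^ i * ((m + 1).choose i : ℝ) * poch y i * poch (z + i) (m + 1 - i)
        = (∑ i ∈ range (m + 1),
            (-1 : ℝ) ^ (i + 1) * ((m + 1).choose (i + 1) : ℝ) * poch y (i + 1) *
              poch (z + (i + 1 : ℕ)) (m + 1 - (i + 1)))
          + (-1 : ℝ) ^ 0 * ((m + 1).choose 0 : ℝ) * poch y 0 * poch (z + (0 : ℕ)) (m + 1 - 0) :=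
        Finset.sum_range_succ' _ _
      _ = (∑ i ∈ range (m + 1),
            (-(y * ((-1 : ℝ) ^ i * (m.choose i : ℝ) * poch (y + 1) i * poch ((z + 1) + i) (m - i)))
             + (-1 : ℝ) ^ (i + 1) * (m.choose (i + 1) : ℝ) * poch y (i + 1) *
                poch (z + (i + 1 : ℕ)) (m + 1 - (i + 1))))
          + poch z (m + 1) := by
        congr 1
        · refine Finset.sum_congr rfl fun i hi => ?_
          rw [Nat.succ_sub_succ, Nat.choose_succ_succ', poch_succ' y i]
          push_cast
          ring_nf
        · simp [poch_zero]
      _ = -(y * poch (z - y) m)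
          + ((∑ i ∈ range (m + 1),
              (-1 : ℝ) ^ (i + 1) * (m.choose (i + 1) : ℝ) * poch y (i + 1) *
                poch (z + (i + 1 : ℕ)) (m + 1 - (i + 1))) + poch z (m + 1)) := by
        rw [Finset.sum_add_distrib]
        rw [show ∀ A B C : ℝ, A + B + C = A + (B + C) from fun A B C => by ring]
        congr 1
        calc ∑ i ∈ range (m + 1),
            -(y * ((-1 : ℝ) ^ i * (m.choose i : ℝ) * poch (y + 1) i * poch ((z + 1) + i) (m - i)))
            = -(y * ∑ i ∈ range (m + 1),
                (-1 : ℝ) ^ i * (m.choose i : ℝ) * poch (y + 1) i * poch ((z + 1) + i) (m - i)) := by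
              rw [Finset.sum_neg_distrib, Finset.mul_sum]
          _ = -(y * poch (z - y) m) := by rw [ih1]
      _ = -(y * poch (z - y) m)
          + ∑ i ∈ range (m + 1 + 1),
              (-1 : ℝ) ^ i * (m.choose i : ℝ) * poch y i * poch (z + i) (m + 1 - i) := by
        congr 1
        rw [Finset.sum_range_succ' (fun i => (-1 : ℝ) ^ i * (m.choose i : ℝ) * poch y i *
          poch (z + (i : ℕ)) (m + 1 - i)) (m + 1)]
        simp [poch_zero]
      _ = -(y * poch (z - y) m) + (z + m) * poch (z - y) m := by
        congr 1
        rw [Finset.sum_range_succ]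
        simp only [Nat.choose_succ_self, Nat.cast_zero, mul_zero, zero_mul, add_zero]
        calc ∑ i ∈ range (m + 1),
            (-1 : ℝ) ^ i * (m.choose i : ℝ) * poch y i * poch (z + i) (m + 1 - i)
            = ∑ i ∈ range (m + 1),
              ((-1 : ℝ) ^ i * (m.choose i : ℝ) * poch y i * poch (z + i) (m - i)) * (z + m) := by
              refine Finset.sum_congr rfl fun i hi => ?_
              have hi' : i ≤ m := by simpa [Nat.lt_succ_iff] using hi
              rw [show m + 1 - i = (m - i) + 1 from by omega, poch_succ,
                show (z + (i : ℝ)) + ((m - i : ℕ) : ℝ) = z + m from by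
                  push_cast [Nat.cast_sub hi']; ring]
              ring
          _ = (z + m) * poch (z - y) m := by rw [← Finset.sum_mul, ih2]; ring
      _ = poch (z - y) (m + 1) := by
        rw [poch_succ]
        push_cast
        ring

lemma V2 : ∀ (m : ℕ) (u v : ℝ),
    poch (u + v) m = ∑ l ∈ range (m + 1), (m.choose l : ℝ) * poch u l * poch v (m - l) := by
  intro m
  induction m with
  | zero => intro u v; simp [poch_zero]
  | succ m ih =>
    intro u v
    have ih1 := (ih (u + 1) v).symm
    rw [show (u + 1) + v = u + v + 1 from by ring] at ih1
    have ih2 := (ih u (v + 1)).symm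
    rw [show u + (v + 1) = u + v + 1 from by ring] at ih2
    refine Eq.symm ?_
    calc ∑ l ∈ range (m + 1 + 1), ((m + 1).choose l : ℝ) * poch u l * poch v (m + 1 - l)
        = (∑ l ∈ range (m + 1),
            ((m + 1).choose (l + 1) : ℝ) * poch u (l + 1) * poch v (m + 1 - (l + 1)))
          + ((m + 1).choose 0 : ℝ) * poch u 0 * poch v (m + 1 - 0) :=
        Finset.sum_range_succ' _ _
      _ = (∑ l ∈ range (m + 1),
            (u * ((m.choose l : ℝ) * poch (u + 1) l * poch v (m - l))
             + (m.choose (l + 1) : ℝ) * poch u (l + 1) * poch v (m + 1 - (l + 1))))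
          + poch v (m + 1) := by
        congr 1
        · refine Finset.sum_congr rfl fun l hl => ?_
          rw [Nat.succ_sub_succ, Nat.choose_succ_succ', poch_succ' u l]
          push_cast
          ring
        · simp [poch_zero]
      _ = u * poch (u + v + 1) m
          + ((∑ l ∈ range (m + 1),
              (m.choose (l + 1) : ℝ) * poch u (l + 1) * poch v (m + 1 - (l + 1)))
            + poch v (m + 1)) := by
        rw [Finset.sum_add_distrib]
        rw [show ∀ A B C : ℝ, A + B + C = A + (B + C) from fun A B C => by ring]
        congr 1
        rw [← Finset.mul_sum, ih1]
      _ = u * poch (u + v + 1) m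
          + ∑ l ∈ range (m + 1 + 1), (m.choose l : ℝ) * poch u l * poch v (m + 1 - l) := by
        congr 1
        rw [Finset.sum_range_succ' (fun l => (m.choose l : ℝ) * poch u l * poch v (m + 1 - l))
          (m + 1)]
        simp [poch_zero]
      _ = u * poch (u + v + 1) m + v * poch (u + v + 1) m := by
        congr 1
        rw [Finset.sum_range_succ]
        simp only [Nat.choose_succ_self, Nat.cast_zero, mul_zero, zero_mul, add_zero]
        calc ∑ l ∈ range (m + 1), (m.choose l : ℝ) * poch u l * poch v (m + 1 - l)
            = ∑ l ∈ range (m + 1), v * ((m.choose l : ℝ) * poch u l * poch (v + 1) (m - l)) := by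
              refine Finset.sum_congr rfl fun l hl => ?_
              have hl' : l ≤ m := by simpa [Nat.lt_succ_iff] using hl
              rw [show m + 1 - l = (m - l) + 1 from by omega, poch_succ']
              ring
          _ = v * poch (u + v + 1) m := by rw [← Finset.mul_sum, ih2]
      _ = poch (u + v) (m + 1) := by rw [poch_succ']; ring

lemma Saal (m : ℕ) (x y z : ℝ) :
    ∑ i ∈ range (m + 1),
      (-1 : ℝ) ^ i * (m.choose i : ℝ) * poch x i * poch y i * poch (z + i) (m - i) *
        poch (x + y - z - m + 1 + i) (m - i)
      = (-1 : ℝ) ^ m * poch (z - x) m * poch (z - y) m := by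
  calc
    ∑ i ∈ range (m + 1),
      (-1 : ℝ) ^ i * (m.choose i : ℝ) * poch x i * poch y i * poch (z + i) (m - i) *
        poch (x + y - z - m + 1 + i) (m - i)
      = ∑ i ∈ range (m + 1), ∑ l ∈ range (m + 1 - i),
          (-1 : ℝ) ^ i * (m.choose i : ℝ) * poch x i * poch y i * poch (z + i) (m - i) *
            (((m - i).choose l : ℝ) * poch (x + (i : ℝ)) l *
              poch (y - z - (m : ℝ) + 1) (m - i - l)) := by
        refine Finset.sum_congr rfl fun i hi => ?_
        have hi' : i ≤ m := by simpa [Nat.lt_succ_iff] using hi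
        rw [show x + y - z - (m : ℝ) + 1 + (i : ℝ) = (x + (i : ℝ)) + (y - z - (m : ℝ) + 1) from
          by ring]
        rw [V2 (m - i) (x + (i : ℝ)) (y - z - (m : ℝ) + 1)]
        rw [show m + 1 - i = (m - i) + 1 from by omega]
        rw [Finset.mul_sum]
    _ = ∑ s ∈ range (m + 1), ∑ i ∈ range (s + 1),
          (-1 : ℝ) ^ i * (m.choose i : ℝ) * poch x i * poch y i * poch (z + i) (m - i) *
            (((m - i).choose (s - i) : ℝ) * poch (x + (i : ℝ)) (s - i) *
              poch (y - z - (m : ℝ) + 1) (m - i - (s - i))) :=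
        (Finset.sum_range_diag_flip (m + 1) _).symm
    _ = ∑ s ∈ range (m + 1),
          ((m.choose s : ℝ) * poch x s * poch (y - z - (m : ℝ) + 1) (m - s) *
            poch (z + (s : ℝ)) (m - s)) * poch (z - y) s := by
        refine Finset.sum_congr rfl fun s hs => ?_
        have hs' : s ≤ m := by simpa [Nat.lt_succ_iff] using hs
        calc
          ∑ i ∈ range (s + 1),
            (-1 : ℝ) ^ i * (m.choose i : ℝ) * poch x i * poch y i * poch (z + i) (m - i) *
              (((m - i).choose (s - i) : ℝ) * poch (x + (i : ℝ)) (s - i) *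
                poch (y - z - (m : ℝ) + 1) (m - i - (s - i)))
            = ∑ i ∈ range (s + 1),
                ((m.choose s : ℝ) * poch x s * poch (y - z - (m : ℝ) + 1) (m - s) *
                  poch (z + (s : ℝ)) (m - s)) *
                ((-1 : ℝ) ^ i * (s.choose i : ℝ) * poch y i * poch (z + i) (s - i)) := by
              refine Finset.sum_congr rfl fun i hi => ?_
              have hi' : i ≤ s := by simpa [Nat.lt_succ_iff] using hi
              have e1 : m - i - (s - i) = m - s := by omega
              have e2 : ((m.choose i : ℕ) : ℝ) * (((m - i).choose (s - i) : ℕ) : ℝ)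
                  = ((m.choose s : ℕ) : ℝ) * ((s.choose i : ℕ) : ℝ) := by
                exact_mod_cast congrArg (Nat.cast (R := ℝ)) (choose_trinomial hi' hs').symm
              have e3 : poch x s = poch x i * poch (x + (i : ℝ)) (s - i) := by
                have := poch_add x i (s - i)
                rwa [show i + (s - i) = s from by omega] at this
              have e4 : poch (z + (i : ℝ)) (m - i)
                  = poch (z + (i : ℝ)) (s - i) * poch (z + (s : ℝ)) (m - s) := by
                have := poch_add (z + (i : ℝ)) (s - i) (m - s)
                rw [show (s - i) + (m - s) = m - i from by omega] at this
                rwa [show z + (i : ℝ) + ((s - i : ℕ) : ℝ) = z + (s : ℝ) from by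
                  push_cast [Nat.cast_sub hi']; ring] at this
              rw [e1, e3, e4]
              linear_combination ((-1 : ℝ) ^ i * poch x i * poch (x + (i : ℝ)) (s - i) *
                poch y i * poch (z + (i : ℝ)) (s - i) * poch (z + (s : ℝ)) (m - s) *
                poch (y - z - (m : ℝ) + 1) (m - s)) * e2
          _ = ((m.choose s : ℝ) * poch x s * poch (y - z - (m : ℝ) + 1) (m - s) *
                poch (z + (s : ℝ)) (m - s)) * poch (z - y) s := by
              rw [← Finset.mul_sum, V1 s y z]
    _ = ∑ s ∈ range (m + 1),
          ((-1 : ℝ) ^ m * poch (z - y) m) *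
            ((-1 : ℝ) ^ s * (m.choose s : ℝ) * poch x s * poch (z + (s : ℝ)) (m - s)) := by
        refine Finset.sum_congr rfl fun s hs => ?_
        have hs' : s ≤ m := by simpa [Nat.lt_succ_iff] using hs
        rw [show y - z - (m : ℝ) + 1 = -((z - y) + (s : ℝ)) - ((m - s : ℕ) : ℝ) + 1 from by
          push_cast [Nat.cast_sub hs']; ring]
        rw [poch_rev ((z - y) + (s : ℝ)) (m - s)]
        have e6 : poch (z - y) m = poch (z - y) s * poch ((z - y) + (s : ℝ)) (m - s) := by
          have := poch_add (z - y) s (m - s)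
          rwa [show s + (m - s) = m from by omega] at this
        have e7 : ((-1 : ℝ)) ^ (m - s) * (-1 : ℝ) ^ s = (-1 : ℝ) ^ m := by
          rw [← pow_add, Nat.sub_add_cancel hs']
        have e8 : ((-1 : ℝ)) ^ s * (-1 : ℝ) ^ s = 1 := by
          rw [← mul_pow]; norm_num
        rw [e6, ← e7]
        linear_combination (-((-1 : ℝ) ^ (m - s)) * ((m.choose s : ℝ) * poch x s *
          poch (z + (s : ℝ)) (m - s) * poch (z - y) s *
          poch ((z - y) + (s : ℝ)) (m - s))) * e8
    _ = (-1 : ℝ) ^ m * poch (z - x) m * poch (z - y) m := by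
        rw [← Finset.mul_sum, V1 m x z]
        ring

lemma star (n : ℕ) (a b d e : ℝ) :
    ∑ j ∈ range (n + 1),
      (-1 : ℝ) ^ j * (n.choose j : ℝ) * poch a j * poch b j * poch (d + j) (n - j) *
        poch (e + j) (n - j)
    = ∑ k ∈ range (n + 1),
      (-1 : ℝ) ^ k * (n.choose k : ℝ) * poch a k * poch (a + b - n - d - e + 1) k *
        poch ((a - n - d + 1) + k) (n - k) * poch ((a - n - e + 1) + k) (n - k) := by
  calc
    ∑ j ∈ range (n + 1),
      (-1 : ℝ) ^ j * (n.choose j : ℝ) * poch a j * poch b j * poch (d + j) (n - j) *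
        poch (e + j) (n - j)
      = ∑ j ∈ range (n + 1), ∑ k ∈ range (j + 1),
          (fun k l => (-1 : ℝ) ^ (k + l) * (n.choose (k + l) : ℝ) * poch a (k + l) *
            (((k + l).choose k : ℝ) * poch (a + b - (n : ℝ) - d - e + 1) k *
              poch ((n : ℝ) + d + e - a - 1) (k + l - k)) *
            poch (d + ((k + l : ℕ) : ℝ)) (n - (k + l)) *
            poch (e + ((k + l : ℕ) : ℝ)) (n - (k + l))) k (j - k) := by
        refine Finset.sum_congr rfl fun j hj => ?_
        have hb := V2 j (a + b - (n : ℝ) - d - e + 1) ((n : ℝ) + d + e - a - 1)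
        rw [show (a + b - (n : ℝ) - d - e + 1) + ((n : ℝ) + d + e - a - 1) = b from by ring]
          at hb
        rw [hb, Finset.mul_sum, Finset.sum_mul, Finset.sum_mul]
        refine Finset.sum_congr rfl fun k hk => ?_
        have hk' : k ≤ j := by simpa [Nat.lt_succ_iff] using hk
        simp only []
        rw [show k + (j - k) = j from by omega]
    _ = ∑ k ∈ range (n + 1), ∑ l ∈ range (n + 1 - k),
          (-1 : ℝ) ^ (k + l) * (n.choose (k + l) : ℝ) * poch a (k + l) *
            (((k + l).choose k : ℝ) * poch (a + b - (n : ℝ) - d - e + 1) k *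
              poch ((n : ℝ) + d + e - a - 1) (k + l - k)) *
            poch (d + ((k + l : ℕ) : ℝ)) (n - (k + l)) *
            poch (e + ((k + l : ℕ) : ℝ)) (n - (k + l)) :=
        Finset.sum_range_diag_flip (n + 1)
          (fun k l => (-1 : ℝ) ^ (k + l) * (n.choose (k + l) : ℝ) * poch a (k + l) *
            (((k + l).choose k : ℝ) * poch (a + b - (n : ℝ) - d - e + 1) k *
              poch ((n : ℝ) + d + e - a - 1) (k + l - k)) *
            poch (d + ((k + l : ℕ) : ℝ)) (n - (k + l)) *
            poch (e + ((k + l : ℕ) : ℝ)) (n - (k + l)))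
    _ = ∑ k ∈ range (n + 1),
        (-1 : ℝ) ^ k * (n.choose k : ℝ) * poch a k * poch (a + b - n - d - e + 1) k *
          poch ((a - n - d + 1) + k) (n - k) * poch ((a - n - e + 1) + k) (n - k) := by
      refine Finset.sum_congr rfl fun k hk => ?_
      have hk' : k ≤ n := by simpa [Nat.lt_succ_iff] using hk
      have hS := Saal (n - k) (a + (k : ℝ)) ((n : ℝ) + d + e - a - 1) (d + (k : ℝ))
      rw [show (a + (k : ℝ)) + ((n : ℝ) + d + e - a - 1) - (d + (k : ℝ)) - ((n - k : ℕ) : ℝ)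
            + 1 = e + (k : ℝ) from by push_cast [Nat.cast_sub hk']; ring] at hS
      rw [show (d + (k : ℝ)) - (a + (k : ℝ)) = d - a from by ring] at hS
      rw [show (d + (k : ℝ)) - ((n : ℝ) + d + e - a - 1) = (a - (n : ℝ) - e + 1) + (k : ℝ) from
        by ring] at hS
      have hrev : poch ((a - (n : ℝ) - d + 1) + (k : ℝ)) (n - k)
          = (-1 : ℝ) ^ (n - k) * poch (d - a) (n - k) := by
        have := poch_rev (d - a) (n - k)
        rwa [show -(d - a) - ((n - k : ℕ) : ℝ) + 1 = (a - (n : ℝ) - d + 1) + (k : ℝ) from by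
          push_cast [Nat.cast_sub hk']; ring] at this
      rw [show n + 1 - k = (n - k) + 1 from by omega]
      calc
        ∑ l ∈ range ((n - k) + 1),
          (-1 : ℝ) ^ (k + l) * (n.choose (k + l) : ℝ) * poch a (k + l) *
            (((k + l).choose k : ℝ) * poch (a + b - (n : ℝ) - d - e + 1) k *
              poch ((n : ℝ) + d + e - a - 1) (k + l - k)) *
            poch (d + ((k + l : ℕ) : ℝ)) (n - (k + l)) *
            poch (e + ((k + l : ℕ) : ℝ)) (n - (k + l))
          = ∑ l ∈ range ((n - k) + 1),
            ((-1 : ℝ) ^ k * (n.choose k : ℝ) * poch a k *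
                poch (a + b - (n : ℝ) - d - e + 1) k) *
              ((-1 : ℝ) ^ l * ((n - k).choose l : ℝ) * poch (a + (k : ℝ)) l *
                poch ((n : ℝ) + d + e - a - 1) l *
                poch ((d + (k : ℝ)) + (l : ℝ)) ((n - k) - l) *
                poch ((e + (k : ℝ)) + (l : ℝ)) ((n - k) - l)) := by
          refine Finset.sum_congr rfl fun l hl => ?_
          have hl' : l ≤ n - k := by simpa [Nat.lt_succ_iff] using hl
          have hkl : k + l ≤ n := by omega
          have t1 : ((n.choose (k + l) : ℕ) : ℝ) * (((k + l).choose k : ℕ) : ℝ)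
              = ((n.choose k : ℕ) : ℝ) * (((n - k).choose l : ℕ) : ℝ) := by
            have := choose_trinomial (Nat.le_add_right k l) hkl
            rw [Nat.add_sub_cancel_left] at this
            exact_mod_cast congrArg (Nat.cast (R := ℝ)) this
          rw [pow_add, poch_add a k l, show k + l - k = l from by omega,
            show n - (k + l) = (n - k) - l from by omega,
            show d + ((k + l : ℕ) : ℝ) = (d + (k : ℝ)) + (l : ℝ) from by push_cast; ring,
            show e + ((k + l : ℕ) : ℝ) = (e + (k : ℝ)) + (l : ℝ) from by push_cast; ring]
          linear_combination ((-1 : ℝ) ^ k * (-1 : ℝ) ^ l * poch a k * poch (a + (k : ℝ)) l *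
            poch (a + b - (n : ℝ) - d - e + 1) k * poch ((n : ℝ) + d + e - a - 1) l *
            poch ((d + (k : ℝ)) + (l : ℝ)) ((n - k) - l) *
            poch ((e + (k : ℝ)) + (l : ℝ)) ((n - k) - l)) * t1
        _ = ((-1 : ℝ) ^ k * (n.choose k : ℝ) * poch a k *
              poch (a + b - (n : ℝ) - d - e + 1) k) *
            ((-1 : ℝ) ^ (n - k) * poch (d - a) (n - k) *
              poch ((a - (n : ℝ) - e + 1) + (k : ℝ)) (n - k)) := by
          rw [← Finset.mul_sum, hS]
        _ = (-1 : ℝ) ^ k * (n.choose k : ℝ) * poch a k * poch (a + b - n - d - e + 1) k *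
            poch ((a - n - d + 1) + k) (n - k) * poch ((a - n - e + 1) + k) (n - k) := by
          rw [hrev]; ring

lemma F32_eq (n : ℕ) (a b d e : ℝ) (hd : ∀ j ≤ n, poch d j ≠ 0) (he : ∀ j ≤ n, poch e j ≠ 0) :
    F32 n a b d e
      = (∑ j ∈ range (n + 1),
          (-1 : ℝ) ^ j * (n.choose j : ℝ) * poch a j * poch b j * poch (d + j) (n - j) *
            poch (e + j) (n - j)) / (poch d n * poch e n) := by
  rw [F32, Finset.sum_div]
  refine Finset.sum_congr rfl fun j hj => ?_
  have hj' : j ≤ n := by simpa [Nat.lt_succ_iff] using hj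
  have hdn : poch d n = poch d j * poch (d + (j : ℝ)) (n - j) := by
    have := poch_add d j (n - j)
    rwa [show j + (n - j) = n from by omega] at this
  have hen : poch e n = poch e j * poch (e + (j : ℝ)) (n - j) := by
    have := poch_add e j (n - j)
    rwa [show j + (n - j) = n from by omega] at this
  have hdj := hd j hj'
  have hej := he j hj'
  have hdnj : poch (d + (j : ℝ)) (n - j) ≠ 0 := by
    have := hd n le_rfl; rw [hdn] at this; exact (mul_ne_zero_iff.mp this).2
  have henj : poch (e + (j : ℝ)) (n - j) ≠ 0 := by
    have := he n le_rfl; rw [hen] at this; exact (mul_ne_zero_iff.mp this).2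
  have hfac : ((j ! : ℕ) : ℝ) ≠ 0 := Nat.cast_ne_zero.2 (Nat.factorial_ne_zero _)
  rw [poch_neg_nat hj', hdn, hen]
  field_simp


/-- The `₃F₂` transformation identity for terminating series at unit argument. -/
theorem F32_transformation (n : ℕ) (a b d e : ℝ)
    (h : ∀ j ≤ n, poch d j ≠ 0 ∧ poch e j ≠ 0 ∧
      poch (a - n - d + 1) j ≠ 0 ∧ poch (a - n - e + 1) j ≠ 0) :
    F32 n a b d e
      = poch (d - a) n * poch (e - a) n / (poch d n * poch e n) *
          F32 n a (a + b - n - d - e + 1) (a - n - d + 1) (a - n - e + 1) := by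
  have hA := F32_eq n a b d e (fun j hj => (h j hj).1) (fun j hj => (h j hj).2.1)
  have hB := F32_eq n a (a + b - (n : ℝ) - d - e + 1) (a - (n : ℝ) - d + 1)
    (a - (n : ℝ) - e + 1) (fun j hj => (h j hj).2.2.1) (fun j hj => (h j hj).2.2.2)
  have hDn : poch (a - (n : ℝ) - d + 1) n = (-1 : ℝ) ^ n * poch (d - a) n := by
    have := poch_rev (d - a) n
    rwa [show -(d - a) - (n : ℝ) + 1 = a - (n : ℝ) - d + 1 from by ring] at this
  have hEn : poch (a - (n : ℝ) - e + 1) n = (-1 : ℝ) ^ n * poch (e - a) n := by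
    have := poch_rev (e - a) n
    rwa [show -(e - a) - (n : ℝ) + 1 = a - (n : ℝ) - e + 1 from by ring] at this
  have e8 : ((-1 : ℝ)) ^ n * (-1 : ℝ) ^ n = 1 := by rw [← mul_pow]; norm_num
  have hprod : poch (a - (n : ℝ) - d + 1) n * poch (a - (n : ℝ) - e + 1) n
      = poch (d - a) n * poch (e - a) n := by
    rw [hDn, hEn]
    linear_combination (poch (d - a) n * poch (e - a) n) * e8
  obtain ⟨hpd, hpe, hpD, hpE⟩ := h n le_rfl
  have hpda : poch (d - a) n ≠ 0 := by
    have := mul_ne_zero hpD hpE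
    rw [hprod] at this
    exact (mul_ne_zero_iff.mp this).1
  have hpea : poch (e - a) n ≠ 0 := by
    have := mul_ne_zero hpD hpE
    rw [hprod] at this
    exact (mul_ne_zero_iff.mp this).2
  rw [hA, star n a b d e, hB, hprod]
  field_simp
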